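/- Fix β ≥ 1/3. Then the function μ₀(κ) = κ / ((1 + βκ²) tanh(κ)) is strictly decreasing on (0, ∞). -/

import Mathlib

open Real Set

private lemma aux_pos (f f' : ℝ → ℝ) (hd : ∀ x, HasDerivAt f (f' x) x) (h0 : f 0 = 0)
    (hp : ∀ x, 0 < x → 0 < f' x) : ∀ x, 0 < x → 0 < f x := by
  intro x hx
  have hm : StrictMonoOn f (Set.Ici 0) := by
    apply strictMonoOn_of_deriv_pos (convex_Ici 0)
      (fun y _ => (hd y).continuousAt.continuousWithinAt)
    intro y hy
    rw [interior_Ici] at hy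
    rw [(hd y).deriv]
    exact hp y hy
  have := hm Set.self_mem_Ici (Set.mem_Ici.2 hx.le) hx
  rwa [h0] at this

private lemma hd3 (x : ℝ) :
    HasDerivAt (fun x => 6 + (x^2-6)*Real.cosh x + 6*x*Real.sinh x)
      (8*x*Real.cosh x + x^2*Real.sinh x) x := by
  have h1 := ((hasDerivAt_pow 2 x).sub_const 6).mul (Real.hasDerivAt_cosh x)
  have h2 := ((hasDerivAt_id x).const_mul 6).mul (Real.hasDerivAt_sinh x)
  refine ((h1.const_add 6).add h2).congr_deriv ?_
  push_cast
  try simp only [id_eq]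
  ring

private lemma hd2 (x : ℝ) :
    HasDerivAt (fun x => 6*x + (x^2-10)*Real.sinh x + 4*x*Real.cosh x)
      (6 + (x^2-6)*Real.cosh x + 6*x*Real.sinh x) x := by
  have h0 := (hasDerivAt_id x).const_mul 6
  have h1 := ((hasDerivAt_pow 2 x).sub_const 10).mul (Real.hasDerivAt_sinh x)
  have h2 := ((hasDerivAt_id x).const_mul 4).mul (Real.hasDerivAt_cosh x)
  refine ((h0.add h1).add h2).congr_deriv ?_
  push_cast
  try simp only [id_eq]
  ring

private lemma hd1 (x : ℝ) :
    HasDerivAt (fun x => 3*x^2 + 12 + 2*x*Real.sinh x + (x^2-12)*Real.cosh x)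
      (6*x + (x^2-10)*Real.sinh x + 4*x*Real.cosh x) x := by
  have h0 := ((hasDerivAt_pow 2 x).const_mul 3).add_const 12
  have h1 := ((hasDerivAt_id x).const_mul 2).mul (Real.hasDerivAt_sinh x)
  have h2 := ((hasDerivAt_pow 2 x).sub_const 12).mul (Real.hasDerivAt_cosh x)
  refine ((h0.add h1).add h2).congr_deriv ?_
  push_cast
  try simp only [id_eq]
  ring

private lemma hd0 (x : ℝ) :
    HasDerivAt (fun x => x^3 + 12*x + (x^2-12)*Real.sinh x)
      (3*x^2 + 12 + 2*x*Real.sinh x + (x^2-12)*Real.cosh x) x := by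
  have h0 := hasDerivAt_pow 3 x
  have h1 := (hasDerivAt_id x).const_mul 12
  have h2 := ((hasDerivAt_pow 2 x).sub_const 12).mul (Real.hasDerivAt_sinh x)
  refine ((h0.add h1).add h2).congr_deriv ?_
  push_cast
  try simp only [id_eq]
  ring

private lemma key : ∀ x : ℝ, 0 < x → (12 - x^2) * Real.sinh x < x^3 + 12*x := by
  have h4 : ∀ x : ℝ, 0 < x → 0 < 8*x*Real.cosh x + x^2*Real.sinh x := by
    intro x hx
    have hc := Real.cosh_pos x
    have hs := Real.sinh_pos_iff.mpr hx
    nlinarith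
  have h3 := aux_pos _ _ hd3 (by norm_num) h4
  have h2 := aux_pos _ _ hd2 (by norm_num) h3
  have h1 := aux_pos _ _ hd1 (by norm_num) h2
  have h0 := aux_pos _ _ hd0 (by norm_num) h1
  intro x hx
  have := h0 x hx
  nlinarith [this]

private lemma tanh_hasDerivAt (x : ℝ) :
    HasDerivAt Real.tanh (1 / Real.cosh x ^ 2) x := by
  have hfun : Real.tanh = fun x => Real.sinh x / Real.cosh x :=
    funext Real.tanh_eq_sinh_div_cosh
  have h := (Real.hasDerivAt_sinh x).div (Real.hasDerivAt_cosh x)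
    (ne_of_gt (Real.cosh_pos x))
  rw [hfun]
  refine h.congr_deriv ?_
  have e := Real.cosh_sq_sub_sinh_sq x
  field_simp
  nlinarith [e]

theorem stmt_2 (β : ℝ) (hβ : 1 / 3 ≤ β) :
    StrictAntiOn (fun κ : ℝ => κ / ((1 + β * κ ^ 2) * Real.tanh κ)) (Set.Ioi 0) := by
  have hβ0 : (0:ℝ) < β := lt_of_lt_of_le (by norm_num) hβ
  have htanhpos : ∀ κ : ℝ, 0 < κ → 0 < Real.tanh κ := by
    intro κ hκ
    rw [Real.tanh_eq_sinh_div_cosh]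
    exact div_pos (Real.sinh_pos_iff.mpr hκ) (Real.cosh_pos κ)
  have hden : ∀ κ : ℝ, κ ∈ Set.Ioi (0:ℝ) → (1 + β * κ ^ 2) * Real.tanh κ ≠ 0 := by
    intro κ hκ
    have hk : 0 < κ := hκ
    have h1 : 0 < 1 + β * κ ^ 2 := by positivity
    exact ne_of_gt (mul_pos h1 (htanhpos κ hk))
  apply strictAntiOn_of_deriv_neg (convex_Ioi 0)
  · apply ContinuousOn.div continuous_id.continuousOn
    · have hct : Continuous Real.tanh :=
        continuous_iff_continuousAt.mpr fun x => (tanh_hasDerivAt x).continuousAt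
      exact (Continuous.mul (by continuity) hct).continuousOn
    · exact hden
  · intro κ hκ
    rw [interior_Ioi] at hκ
    have hk : 0 < κ := hκ
    have hg : HasDerivAt (fun κ : ℝ => (1 + β * κ ^ 2) * Real.tanh κ)
        ((2*β*κ) * Real.tanh κ + (1 + β * κ ^ 2) * (1 / Real.cosh κ ^ 2)) κ := by
      have h1 := ((hasDerivAt_pow 2 κ).const_mul β).const_add 1
      have := h1.mul (tanh_hasDerivAt κ)
      refine this.congr_deriv ?_
      push_cast
      ring
    have hf : HasDerivAt (fun κ : ℝ => κ / ((1 + β * κ ^ 2) * Real.tanh κ))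
        ((1 * ((1 + β * κ ^ 2) * Real.tanh κ) -
          κ * ((2*β*κ) * Real.tanh κ + (1 + β * κ ^ 2) * (1 / Real.cosh κ ^ 2))) /
          ((1 + β * κ ^ 2) * Real.tanh κ) ^ 2) κ :=
      (hasDerivAt_id κ).div hg (hden κ hκ)
    rw [hf.deriv]
    apply div_neg_of_neg_of_pos
    · -- numerator negative
      set s := Real.sinh κ with hsdef
      set c := Real.cosh κ with hcdef
      have hc : 0 < c := Real.cosh_pos κ
      have hs : 0 < s := Real.sinh_pos_iff.mpr hk
      have h1 : c ^ 2 - s ^ 2 = 1 := Real.cosh_sq_sub_sinh_sq κ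
      have hkey := key (2*κ) (by linarith)
      rw [Real.sinh_two_mul] at hkey
      have htanh : Real.tanh κ = s / c := Real.tanh_eq_sinh_div_cosh κ
      rw [htanh]
      have hnum : (1 * ((1 + β * κ ^ 2) * (s/c)) -
          κ * ((2*β*κ) * (s/c) + (1 + β * κ ^ 2) * (1 / c ^ 2)))
          = ((1 - β*κ^2) * (s*c) - κ*(1 + β*κ^2)) / c^2 := by
        field_simp
        ring
      rw [hnum]
      apply div_neg_of_neg_of_pos _ (by positivity)
      have hsc : κ < s * c := by
        have h1le : 1 ≤ c := Real.one_le_cosh κ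
        have : κ < s := Real.self_lt_sinh_iff.mpr hk
        nlinarith
      nlinarith [mul_nonneg (mul_nonneg (by linarith : (0:ℝ) ≤ β - 1/3) (sq_nonneg κ))
        (by nlinarith : (0:ℝ) ≤ s*c + κ), hkey]
    · have h1 : 0 < 1 + β * κ ^ 2 := by positivity
      exact pow_pos (mul_pos h1 (htanhpos κ hk)) 2
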